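/- Let f, g : ℝ → ℝ be functions with ∫|f| and ∫|g| finite, f(x) = 0 for all x < 0, |f(x)| ≤ M for all x, |g(x)| ≤ P for all x, and f Lipschitz with constant L on [0,∞). Then the convolution (f*g)(x) = ∫_{-∞}^{∞} f(x-z)g(z)dz is Lipschitz continuous with constant L·∫_{-∞}^{∞}|g(z)|dz + M·P. -/

import Mathlib

open MeasureTheory Set

theorem stmt1 (f g : ℝ → ℝ) (M P L : ℝ)
    (hfint : Integrable f) (hgint : Integrable g)
    (hf0 : ∀ x < (0 : ℝ), f x = 0)
    (hfM : ∀ x, |f x| ≤ M) (hgP : ∀ x, |g x| ≤ P)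
    (hfL : ∀ x ≥ (0 : ℝ), ∀ y ≥ (0 : ℝ), |f x - f y| ≤ L * |x - y|) :
    ∀ x y : ℝ,
      |(∫ z, f (x - z) * g z) - ∫ z, f (y - z) * g z| ≤
        (L * (∫ z, |g z|) + M * P) * |x - y| := by
  have hM : 0 ≤ M := le_trans (abs_nonneg _) (hfM 0)
  have hP : 0 ≤ P := le_trans (abs_nonneg _) (hgP 0)
  have hL : 0 ≤ L := by
    have := hfL 0 le_rfl 1 (by norm_num)
    simp at this
    exact le_trans (abs_nonneg _) this
  have hgabs : 0 ≤ ∫ z, |g z| := integral_nonneg fun z => abs_nonneg _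
  have hint : ∀ a : ℝ, Integrable (fun z => f (a - z) * g z) := by
    intro a
    exact (hgint.bdd_mul ((hfint.comp_sub_left a).aestronglyMeasurable)
      (c := M) (Filter.Eventually.of_forall fun z => by simpa using hfM _))
  intro x y
  set s : Set ℝ := uIcc x y with hs
  have hbd : ∀ z, ‖f (x - z) * g z - f (y - z) * g z‖ ≤
      L * |x - y| * |g z| + s.indicator (fun _ => M * P) z := by
    intro z
    have h1 : 0 ≤ L * |x - y| * |g z| :=
      mul_nonneg (mul_nonneg hL (abs_nonneg _)) (abs_nonneg _)
    have h2 : 0 ≤ s.indicator (fun _ => M * P) z := by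
      apply Set.indicator_nonneg
      intro _ _; exact mul_nonneg hM hP
    rw [Real.norm_eq_abs]
    rcases le_or_gt 0 (x - z) with hx | hx <;> rcases le_or_gt 0 (y - z) with hy | hy
    · -- both nonneg
      have := hfL _ hx _ hy
      have heq : (x - z) - (y - z) = x - y := by ring
      rw [heq] at this
      calc |f (x - z) * g z - f (y - z) * g z|
          = |f (x - z) - f (y - z)| * |g z| := by rw [← abs_mul]; ring_nf
        _ ≤ L * |x - y| * |g z| := mul_le_mul_of_nonneg_right this (abs_nonneg _)
        _ ≤ _ := le_add_of_nonneg_right h2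
    · -- x - z ≥ 0, y - z < 0
      have hfy : f (y - z) = 0 := hf0 _ hy
      have hmem : z ∈ s := by
        rw [hs, Set.mem_uIcc]
        right
        constructor
        · linarith
        · linarith
      rw [hfy, Set.indicator_of_mem hmem]
      have : |f (x - z) * g z - 0 * g z| ≤ M * P := by
        rw [zero_mul, sub_zero, abs_mul]
        exact mul_le_mul (hfM _) (hgP _) (abs_nonneg _) hM
      linarith
    · -- y - z ≥ 0, x - z < 0
      have hfx : f (x - z) = 0 := hf0 _ hx
      have hmem : z ∈ s := by
        rw [hs, Set.mem_uIcc]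
        left
        constructor
        · linarith
        · linarith
      rw [hfx, Set.indicator_of_mem hmem]
      have : |0 * g z - f (y - z) * g z| ≤ M * P := by
        rw [zero_mul, zero_sub, abs_neg, abs_mul]
        exact mul_le_mul (hfM _) (hgP _) (abs_nonneg _) hM
      linarith
    · -- both neg
      rw [hf0 _ hx, hf0 _ hy]
      simpa using le_add_of_nonneg_of_le h1 h2
  have hint2 : Integrable (fun z => L * |x - y| * |g z| + s.indicator (fun _ => M * P) z) := by
    apply Integrable.add
    · exact hgint.abs.const_mul _
    · rw [integrable_indicator_iff measurableSet_uIcc]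
      exact integrableOn_const (by rw [Real.volume_interval]; exact ENNReal.ofReal_ne_top)
  have hstep : |(∫ z, f (x - z) * g z) - ∫ z, f (y - z) * g z| ≤
      ∫ z, (L * |x - y| * |g z| + s.indicator (fun _ => M * P) z) := by
    rw [← integral_sub (hint x) (hint y), ← Real.norm_eq_abs]
    exact norm_integral_le_of_norm_le hint2 (Filter.Eventually.of_forall hbd)
  have hval : ∫ z, (L * |x - y| * |g z| + s.indicator (fun _ => M * P) z) =
      L * |x - y| * (∫ z, |g z|) + M * P * |x - y| := by
    rw [integral_add (hgint.abs.const_mul _)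
      (by rw [integrable_indicator_iff measurableSet_uIcc]
          exact integrableOn_const (by rw [Real.volume_interval]; exact ENNReal.ofReal_ne_top)),
      integral_const_mul, integral_indicator measurableSet_uIcc, setIntegral_const,
      Real.volume_real_interval, smul_eq_mul,
      abs_sub_comm y x]
    ring
  calc |(∫ z, f (x - z) * g z) - ∫ z, f (y - z) * g z|
      ≤ L * |x - y| * (∫ z, |g z|) + M * P * |x - y| := by rw [← hval]; exact hstep
    _ = (L * (∫ z, |g z|) + M * P) * |x - y| := by ring
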